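/- arXiv:2011.06446 — 4 statements merged into one kernel-verified Lean document; each statement's English description precedes it below -/
import Mathlib

section
/- Let n be a prime with n ≥ 2d+1 and z = (z_1,...,z_d) with 1 ≤ z_t ≤ n-1 and all z_t distinct. For the rank-1 lattice x_i = (i·z mod n)/n, the minimum pairwise l1 toroidal distance is at most (n+1)d/(4n). -/
/-- The i-th point of the rank-1 lattice with n points and generating vector z. -/
noncomputable def latticePoint (n d : ℕ) (z : Fin d → ℕ) (i : ℕ) : Fin d → ℝ :=
  fun t => ((i * z t) % n : ℕ) / n

/-- The l1-norm-based toroidal distance on [0,1)^d. -/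
noncomputable def torDist1 {d : ℕ} (x y : Fin d → ℝ) : ℝ :=
  ∑ t, min |x t - y t| (1 - |x t - y t|)

lemma aux_gauss (h : ℕ) : (∑ m ∈ Finset.Ico 1 (h+1), m) * 2 = h*(h+1) := by
  induction h with
  | zero => simp
  | succ k ih =>
    rw [Finset.sum_Ico_succ_top (by omega)]
    nlinarith [ih]

lemma aux_sum_min_le (h : ℕ) :
    (∑ m ∈ Finset.Ico 1 (2*h+1), min m (2*h+1-m)) ≤ h*(h+1) := by
  rw [← Finset.sum_Ico_consecutive (fun m => min m (2*h+1-m))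
    (show 1 ≤ h+1 by omega) (show h+1 ≤ 2*h+1 by omega)]
  have e1 : ∑ m ∈ Finset.Ico 1 (h+1), min m (2*h+1-m) = ∑ m ∈ Finset.Ico 1 (h+1), m :=
    Finset.sum_congr rfl (fun m hm => by rw [Finset.mem_Ico] at hm; omega)
  have e2 : ∑ m ∈ Finset.Ico (h+1) (2*h+1), min m (2*h+1-m)
      = ∑ m ∈ Finset.Ico (h+1) (2*h+1), (2*h+1-m) :=
    Finset.sum_congr rfl (fun m hm => by rw [Finset.mem_Ico] at hm; omega)
  have e3 : ∑ m ∈ Finset.Ico (h+1) (2*h+1), (2*h+1-m) = ∑ m ∈ Finset.Ico 1 (h+1), m := by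
    rw [Finset.sum_Ico_eq_sum_range, Finset.sum_Ico_eq_sum_range]
    have h1 : 2*h+1-(h+1) = h := by omega
    have h2 : h+1-1 = h := by omega
    rw [h1, h2]
    rw [← Finset.sum_range_reflect (fun i => 1 + i) h]
    exact Finset.sum_congr rfl (fun i hi => by rw [Finset.mem_range] at hi; omega)
  have := aux_gauss h
  omega

/-- For a non-degenerate rank-1 lattice with n ≥ 2d+1 prime, the minimum pairwise
l1 toroidal distance is at most (n+1)d/(4n). -/
theorem stmt8 (n d : ℕ) (hn : n.Prime) (hnd : 2 * d + 1 ≤ n) (z : Fin d → ℕ)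
    (hz : ∀ t, 1 ≤ z t ∧ z t ≤ n - 1) (hinj : Function.Injective z) :
    ∃ i < n, ∃ j < n, i ≠ j ∧
      torDist1 (latticePoint n d z i) (latticePoint n d z j) ≤
        ((n : ℝ) + 1) * d / (4 * n) := by
  haveI := Fact.mk hn
  have hn2 : 2 ≤ n := hn.two_le
  rcases Nat.eq_zero_or_pos d with hd | hd
  · refine ⟨1, by omega, 0, by omega, by omega, ?_⟩
    subst hd
    simp [torDist1]
  -- d ≥ 1 so n ≥ 3, n odd
  have hn3 : 3 ≤ n := by omega
  have hodd : Odd n := hn.odd_of_ne_two (by omega)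
  obtain ⟨h, hh⟩ := hodd
  have hnpos : (0:ℝ) < n := by positivity
  set K := Finset.Ico 1 n with hK
  have hx0 : ∀ t, latticePoint n d z 0 t = 0 := by
    intro t; simp [latticePoint]
  have hzt : ∀ t : Fin d, ¬ (n ∣ z t) := by
    intro t hdvd
    have := (hz t).1
    have := (hz t).2
    have := Nat.le_of_dvd (by omega) hdvd
    omega
  have hinjOn : ∀ t : Fin d, ∀ a ∈ K, ∀ b ∈ K, a * z t % n = b * z t % n → a = b := by
    intro t a ha b hb hab
    rw [hK, Finset.mem_Ico] at ha hb
    have hcast : ((a * z t % n : ℕ) : ZMod n) = ((b * z t % n : ℕ) : ZMod n) := by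
      rw [hab]
    rw [ZMod.natCast_mod, ZMod.natCast_mod] at hcast
    push_cast at hcast
    have hz0 : (z t : ZMod n) ≠ 0 := by
      rw [Ne, ZMod.natCast_eq_zero_iff]
      exact hzt t
    have hab' : (a : ZMod n) = (b : ZMod n) := mul_right_cancel₀ hz0 hcast
    have hval : ((a : ZMod n)).val = ((b : ZMod n)).val := by rw [hab']
    rwa [ZMod.val_natCast_of_lt ha.2, ZMod.val_natCast_of_lt hb.2] at hval
  have himg : ∀ t : Fin d, K.image (fun k => k * z t % n) = K := by
    intro t
    apply Finset.eq_of_subset_of_card_le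
    · intro m hm
      rw [Finset.mem_image] at hm
      obtain ⟨k, hk, rfl⟩ := hm
      rw [hK, Finset.mem_Ico] at hk ⊢
      constructor
      · by_contra hc
        have h0 : k * z t % n = 0 := by omega
        have hdvd : n ∣ k * z t := Nat.dvd_of_mod_eq_zero h0
        rcases (Nat.Prime.dvd_mul hn).mp hdvd with hk' | hz'
        · exact absurd (Nat.le_of_dvd (by omega) hk') (by omega)
        · exact hzt t hz'
      · exact Nat.mod_lt _ (by omega)
    · rw [Finset.card_image_of_injOn (fun a ha b hb => hinjOn t a ha b hb)]
  -- value of min on a coordinate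
  have hmin : ∀ c : ℕ, c < n →
      min ((c:ℝ)/n) (1 - (c:ℝ)/n) = ((min c (n - c) : ℕ) : ℝ) / n := by
    intro c hc
    have he : (1 : ℝ) - (c:ℝ)/n = ((n - c : ℕ) : ℝ)/n := by
      rw [Nat.cast_sub hc.le]
      field_simp
    rw [he, Nat.cast_min, min_div_div_right hnpos.le]
  -- per coordinate nat sum
  have hnat : ∀ t : Fin d,
      (∑ k ∈ K, min (k * z t % n) (n - k * z t % n)) ≤ h * (h+1) := by
    intro t
    have := Finset.sum_image (s := K) (g := fun k => k * z t % n)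
      (f := fun m => min m (n - m)) (fun a ha b hb => hinjOn t a ha b hb)
    rw [himg t] at this
    rw [← this, hK, hh]
    exact aux_sum_min_le h
  -- sum over K of torDist1
  have hsum : ∑ k ∈ K, torDist1 (latticePoint n d z k) (latticePoint n d z 0)
      ≤ (d : ℝ) * (h * (h+1)) / n := by
    have hterm : ∀ k, torDist1 (latticePoint n d z k) (latticePoint n d z 0)
        = ∑ t, ((min (k * z t % n) (n - k * z t % n) : ℕ) : ℝ) / n := by
      intro k
      unfold torDist1
      refine Finset.sum_congr rfl (fun t _ => ?_)
      rw [hx0 t]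
      have hcn : k * z t % n < n := Nat.mod_lt _ (by omega)
      have habs : |latticePoint n d z k t - 0| = ((k * z t % n : ℕ) : ℝ) / n := by
        unfold latticePoint
        rw [sub_zero, abs_of_nonneg (by positivity)]
      rw [habs, hmin _ hcn]
    calc ∑ k ∈ K, torDist1 (latticePoint n d z k) (latticePoint n d z 0)
        = ∑ k ∈ K, ∑ t, ((min (k * z t % n) (n - k * z t % n) : ℕ) : ℝ) / n :=
          Finset.sum_congr rfl (fun k _ => hterm k)
      _ = ∑ t, ∑ k ∈ K, ((min (k * z t % n) (n - k * z t % n) : ℕ) : ℝ) / n :=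
          Finset.sum_comm
      _ ≤ ∑ t : Fin d, ((h * (h+1) : ℕ) : ℝ) / n := by
          refine Finset.sum_le_sum (fun t _ => ?_)
          rw [← Finset.sum_div]
          gcongr
          rw [← Nat.cast_sum]
          exact_mod_cast hnat t
      _ = (d : ℝ) * (h * (h+1)) / n := by
          rw [Finset.sum_const, Finset.card_univ, Fintype.card_fin]
          push_cast
          ring
  -- average argument
  have hne : K.Nonempty := ⟨1, by rw [hK, Finset.mem_Ico]; omega⟩
  have hbound : ∑ k ∈ K, torDist1 (latticePoint n d z k) (latticePoint n d z 0)
      ≤ ∑ _k ∈ K, ((n : ℝ) + 1) * d / (4 * n) := by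
    rw [Finset.sum_const, hK, Nat.card_Ico, nsmul_eq_mul]
    refine hsum.trans (le_of_eq ?_)
    have hc : ((n - 1 : ℕ):ℝ) = 2*h := by rw [hh]; push_cast; ring
    rw [hc, hh]
    push_cast
    field_simp
    ring
  obtain ⟨k, hkK, hk⟩ := Finset.exists_le_of_sum_le hne hbound
  rw [hK, Finset.mem_Ico] at hkK
  exact ⟨k, hkK.2, 0, by omega, by omega, hk⟩
end

section
/- Let n be a prime with n ≥ 2d+1 and z with distinct components 1 ≤ z_t ≤ n-1. For the rank-1 lattice x_i = (i·z mod n)/n, the minimum pairwise l2 toroidal distance is at most sqrt((n+1)d/(12n)). -/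
open Finset

noncomputable def fmin (n a : ℕ) : ℝ := (min ((a:ℝ)/n) (1 - (a:ℝ)/n))^2

lemma fmin_eq {n a : ℕ} (hn : 0 < n) (ha : a < n) :
    fmin n a = ((min a (n - a) : ℕ) : ℝ)^2 / (n:ℝ)^2 := by
  have hn' : (0:ℝ) < n := by exact_mod_cast hn
  have h1 : (1:ℝ) - (a:ℝ)/n = ((n - a : ℕ) : ℝ)/n := by
    rw [Nat.cast_sub ha.le]; field_simp
  unfold fmin
  rw [h1, min_div_div_right hn'.le, Nat.cast_min, div_pow]

lemma six_sum_sq (k : ℕ) : 6 * ∑ i ∈ range (k+1), i^2 = k*(k+1)*(2*k+1) := by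
  induction k with
  | zero => simp
  | succ m ih =>
    rw [sum_range_succ, Nat.mul_add, ih]
    ring

lemma sum_min_sq (M : ℕ) :
    ∑ a ∈ range (2*M+1), (min a (2*M+1 - a))^2 = 2 * ∑ i ∈ range (M+1), i^2 := by
  rw [range_eq_Ico, ← Finset.sum_Ico_consecutive _ (Nat.zero_le (M+1)) (by omega : M+1 ≤ 2*M+1)]
  have h1 : ∑ a ∈ Ico 0 (M+1), (min a (2*M+1-a))^2 = ∑ i ∈ range (M+1), i^2 := by
    rw [← range_eq_Ico]
    refine sum_congr rfl fun a ha => ?_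
    have := mem_range.mp ha
    rw [min_eq_left (by omega)]
  have h2 : ∑ a ∈ Ico (M+1) (2*M+1), (min a (2*M+1-a))^2 = ∑ i ∈ Ico 1 (M+1), i^2 := by
    refine Finset.sum_nbij' (fun a => 2*M+1-a) (fun i => 2*M+1-i) ?_ ?_ ?_ ?_ ?_
    · intro a ha; simp only [mem_Ico] at *; omega
    · intro a ha; simp only [mem_Ico] at *; omega
    · intro a ha; simp only [mem_Ico] at *; omega
    · intro a ha; simp only [mem_Ico] at *; omega
    · intro a ha
      simp only [mem_Ico] at ha
      rw [min_eq_right (by omega)]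
  have h3 : ∑ i ∈ Ico 1 (M+1), i^2 = ∑ i ∈ range (M+1), i^2 := by
    rw [range_eq_Ico, Finset.sum_eq_sum_Ico_succ_bot (by omega : 0 < M+1)]
    simp
  rw [h1, h2, h3]; ring

lemma sum_fmin (M : ℕ) :
    ∑ a ∈ range (2*M+1), fmin (2*M+1) a
      = (((2*M+1:ℕ):ℝ)^2 - 1)/(12*((2*M+1:ℕ):ℝ)) := by
  have hn : 0 < 2*M+1 := by omega
  have key : 3 * ∑ a ∈ range (2*M+1), (min a (2*M+1-a))^2 = M*(M+1)*(2*M+1) := by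
    have h6 := six_sum_sq M
    rw [sum_min_sq]
    omega
  have hS : (3:ℝ) * ((∑ a ∈ range (2*M+1), (min a (2*M+1-a))^2 : ℕ) : ℝ)
      = (M:ℝ)*((M:ℝ)+1)*(2*(M:ℝ)+1) := by exact_mod_cast key
  rw [sum_congr rfl (fun a ha => fmin_eq hn (mem_range.mp ha)), ← Finset.sum_div]
  have hcast : ∑ a ∈ range (2*M+1), ((min a (2*M+1-a) : ℕ) : ℝ)^2
      = ((∑ a ∈ range (2*M+1), (min a (2*M+1-a))^2 : ℕ) : ℝ) := by push_cast; ring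
  rw [hcast]
  have hnR : ((2*M+1:ℕ):ℝ) = 2*(M:ℝ)+1 := by push_cast; ring
  rw [hnR]
  have hpos : (0:ℝ) < 2*(M:ℝ)+1 := by positivity
  rw [div_eq_div_iff (by positivity) (by positivity)]
  linear_combination (4*(2*(M:ℝ)+1)) * hS

lemma sum_range_natCast {n : ℕ} [NeZero n] (F : ZMod n → ℝ) :
    ∑ k ∈ range n, F (k : ZMod n) = ∑ x : ZMod n, F x := by
  refine Finset.sum_nbij' (fun k => (k : ZMod n)) (fun x => x.val) ?_ ?_ ?_ ?_ ?_
  · intro a _; exact mem_univ _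
  · intro x _; exact mem_range.mpr (ZMod.val_lt x)
  · intro a ha; exact ZMod.val_natCast_of_lt (mem_range.mp ha)
  · intro x _; exact ZMod.natCast_rightInverse x
  · intro a _; rfl

lemma sum_fmin_mul (n : ℕ) (hn : n.Prime) (c : ℕ) (hc : ¬ n ∣ c) :
    ∑ k ∈ range n, fmin n (k * c % n) = ∑ a ∈ range n, fmin n a := by
  haveI : Fact n.Prime := ⟨hn⟩
  haveI : NeZero n := ⟨hn.pos.ne'⟩
  have hc' : (c : ZMod n) ≠ 0 := by
    rwa [Ne, ZMod.natCast_eq_zero_iff]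
  have step1 : ∀ k : ℕ, k * c % n = ((k : ZMod n) * (c : ZMod n)).val := by
    intro k; rw [← Nat.cast_mul, ZMod.val_natCast]
  calc ∑ k ∈ range n, fmin n (k * c % n)
      = ∑ k ∈ range n, fmin n (((k : ZMod n) * (c : ZMod n)).val) := by
        refine sum_congr rfl fun k _ => ?_
        rw [step1 k]
    _ = ∑ x : ZMod n, fmin n (x * (c : ZMod n)).val := by
        have h := sum_range_natCast (fun x : ZMod n => fmin n (x * (c : ZMod n)).val)
        simpa using h
    _ = ∑ x : ZMod n, fmin n x.val :=
        Fintype.sum_bijective (· * (c : ZMod n)) (Equiv.mulRight₀ (c : ZMod n) hc').bijective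
          _ _ (fun x => rfl)
    _ = ∑ a ∈ range n, fmin n a := by
        rw [← sum_range_natCast (fun x : ZMod n => fmin n x.val)]
        refine sum_congr rfl fun k hk => ?_
        rw [ZMod.val_natCast_of_lt (mem_range.mp hk)]

/-- The l2-norm-based toroidal distance on [0,1)^d. -/
noncomputable def torDist2 {d : ℕ} (x y : Fin d → ℝ) : ℝ :=
  Real.sqrt (∑ t, (min |x t - y t| (1 - |x t - y t|)) ^ 2)

/-- For a non-degenerate rank-1 lattice with n ≥ 2d+1 prime, the minimum pairwise
l2 toroidal distance is at most sqrt((n+1)d/(12n)). -/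
theorem stmt10 (n d : ℕ) (hn : n.Prime) (hnd : 2 * d + 1 ≤ n) (z : Fin d → ℕ)
    (hz : ∀ t, 1 ≤ z t ∧ z t ≤ n - 1) (hinj : Function.Injective z) :
    ∃ i < n, ∃ j < n, i ≠ j ∧
      torDist2 (latticePoint n d z i) (latticePoint n d z j) ≤
        Real.sqrt (((n : ℝ) + 1) * d / (12 * n)) := by
  have hn2 : 2 ≤ n := hn.two_le
  rcases Nat.eq_zero_or_pos d with hd | hd
  · refine ⟨0, hn.pos, 1, by omega, by omega, ?_⟩
    subst hd
    have : torDist2 (latticePoint n 0 z 0) (latticePoint n 0 z 1) = 0 := by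
      simp [torDist2]
    rw [this]
    positivity
  · -- d ≥ 1, so n ≥ 3 and n is odd
    have hn3 : 3 ≤ n := by omega
    have hodd : Odd n := hn.odd_of_ne_two (by omega)
    obtain ⟨M, hM⟩ : ∃ M, n = 2*M+1 := by
      rw [Nat.odd_iff] at hodd; exact ⟨n/2, by omega⟩
    have hnR : (0:ℝ) < (n:ℝ) := by exact_mod_cast hn.pos
    set B : ℝ := ((n:ℝ)+1)*(d:ℝ)/(12*(n:ℝ)) with hB
    have hne : (Ico 1 n).Nonempty := ⟨1, by simp only [mem_Ico]; omega⟩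
    have hcol : ∀ t : Fin d, ∑ k ∈ Ico 1 n, fmin n (k * z t % n)
        = ((n:ℝ)^2 - 1)/(12*(n:ℝ)) := by
      intro t
      have hdvd : ¬ n ∣ z t := by
        intro h
        have h1 := (hz t).1
        have h2 := (hz t).2
        have := Nat.le_of_dvd (by omega) h
        omega
      have hsplit : ∑ k ∈ range n, fmin n (k * z t % n)
          = fmin n (0 * z t % n) + ∑ k ∈ Ico 1 n, fmin n (k * z t % n) := by
        rw [range_eq_Ico, Finset.sum_eq_sum_Ico_succ_bot hn.pos]
      have h0 : fmin n (0 * z t % n) = 0 := by simp [fmin]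
      have e1 : ∑ k ∈ Ico 1 n, fmin n (k * z t % n) = ∑ a ∈ range n, fmin n a := by
        have := sum_fmin_mul n hn (z t) hdvd
        linarith [hsplit, h0, this]
      rw [e1]
      subst hM
      exact_mod_cast sum_fmin M
    have htot : ∑ k ∈ Ico 1 n, (∑ t : Fin d, fmin n (k * z t % n)) = ∑ k ∈ Ico 1 n, B := by
      calc ∑ k ∈ Ico 1 n, ∑ t : Fin d, fmin n (k * z t % n)
          = ∑ t : Fin d, ∑ k ∈ Ico 1 n, fmin n (k * z t % n) := Finset.sum_comm
        _ = ∑ _t : Fin d, ((n:ℝ)^2-1)/(12*(n:ℝ)) := sum_congr rfl fun t _ => hcol t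
        _ = (d:ℝ) * (((n:ℝ)^2-1)/(12*(n:ℝ))) := by
            rw [Finset.sum_const, Finset.card_univ, Fintype.card_fin, nsmul_eq_mul]
        _ = ∑ _k ∈ Ico 1 n, B := by
            rw [Finset.sum_const, Nat.card_Ico, nsmul_eq_mul]
            have hcast : ((n-1:ℕ):ℝ) = (n:ℝ)-1 := by
              rw [Nat.cast_sub hn.pos]; norm_num
            rw [hcast, hB]
            field_simp
            ring
    obtain ⟨k, hk, hkB⟩ := Finset.exists_le_of_sum_le hne (le_of_eq htot)
    rw [mem_Ico] at hk
    refine ⟨k, hk.2, 0, hn.pos, by omega, ?_⟩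
    have hdist : torDist2 (latticePoint n d z k) (latticePoint n d z 0)
        = Real.sqrt (∑ t : Fin d, fmin n (k * z t % n)) := by
      unfold torDist2 latticePoint fmin
      congr 1
      refine sum_congr rfl fun t _ => ?_
      have h0 : ((0 * z t) % n : ℕ) = 0 := by simp
      rw [h0]
      have hnn : (0:ℝ) ≤ ((k * z t % n : ℕ):ℝ)/(n:ℝ) := by positivity
      rw [Nat.cast_zero, zero_div, sub_zero, abs_of_nonneg hnn]
    rw [hdist]
    exact Real.sqrt_le_sqrt hkB
end

section
/- Suppose n = 2d+1 is prime and z_t = g^(t-1) mod n for a primitive root g mod n. For the rank-1 lattice x_i = (i·z mod n)/n, every pair of distinct points has the same l2 toroidal distance, equal to sqrt(d(d+1)(2d+1)/6)/n = sqrt((n+1)d/(12n)). -/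
lemma sq_sum_aux (d : ℕ) : (∑ x ∈ Finset.Icc 1 d, x ^ 2) * 6 = d * (d + 1) * (2 * d + 1) := by
  induction d with
  | zero => simp
  | succ k ih =>
    rw [Finset.sum_Icc_succ_top (by omega), add_mul, ih]
    ring

/-- For n = 2d+1 prime and z_t = g^(t-1) mod n with g a primitive root, every pair of
distinct lattice points has l2 toroidal distance exactly sqrt(d(d+1)(2d+1)/6)/n. -/
theorem stmt14 (d : ℕ) (hd : 0 < d) (hp : Nat.Prime (2 * d + 1))
    (g : (ZMod (2 * d + 1))ˣ) (hg : ∀ x : (ZMod (2 * d + 1))ˣ, x ∈ Subgroup.zpowers g) :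
    ∀ i < 2 * d + 1, ∀ j < 2 * d + 1, i ≠ j →
      torDist2
          (latticePoint (2 * d + 1) d (fun t => ((g : ZMod (2 * d + 1)) ^ (t : ℕ)).val) i)
          (latticePoint (2 * d + 1) d (fun t => ((g : ZMod (2 * d + 1)) ^ (t : ℕ)).val) j) =
        Real.sqrt ((d : ℝ) * (d + 1) * (2 * d + 1) / 6) / (2 * d + 1) := by
  intro i hi j hj hij
  haveI : Fact (Nat.Prime (2 * d + 1)) := ⟨hp⟩
  have hnpos : 0 < 2 * d + 1 := by omega
  -- order of g
  have hord : orderOf g = 2 * d := by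
    have h1 := orderOf_eq_card_of_forall_mem_zpowers hg
    rw [h1, Nat.card_eq_fintype_card, ZMod.card_units]
    omega
  have h2d : (g : ZMod (2 * d + 1)) ^ (2 * d) = 1 := by
    have h1 : g ^ orderOf g = 1 := pow_orderOf_eq_one g
    rw [hord] at h1
    have := congrArg (Units.val) h1
    simpa using this
  have hneg : (g : ZMod (2 * d + 1)) ^ d = -1 := by
    have hsq : (g : ZMod (2 * d + 1)) ^ d * (g : ZMod (2 * d + 1)) ^ d = 1 := by
      rw [← pow_add]
      have h : d + d = 2 * d := by ring
      rw [h, h2d]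
    rcases mul_self_eq_one_iff.mp hsq with h1 | h1
    · exfalso
      have hu : g ^ d = 1 := Units.ext (by simpa using h1)
      have hdvd := orderOf_dvd_of_pow_eq_one hu
      rw [hord] at hdvd
      have := Nat.le_of_dvd hd hdvd
      omega
    · exact h1
  have hginj : ∀ s s' : ℕ, s < 2 * d → s' < 2 * d →
      (g : ZMod (2 * d + 1)) ^ s = (g : ZMod (2 * d + 1)) ^ s' → s = s' := by
    intro s s' hs hs' h
    have hu : g ^ s = g ^ s' := Units.ext (by simpa using h)
    have h1 := pow_eq_pow_iff_modEq.mp hu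
    rw [hord] at h1
    have h2 : s % (2 * d) = s' % (2 * d) := h1
    rwa [Nat.mod_eq_of_lt hs, Nat.mod_eq_of_lt hs'] at h2
  -- the difference k
  set k : ZMod (2 * d + 1) := (i : ZMod (2 * d + 1)) - (j : ZMod (2 * d + 1)) with hkdef
  have hk0 : k ≠ 0 := by
    intro h
    apply hij
    have hij' : (i : ZMod (2 * d + 1)) = (j : ZMod (2 * d + 1)) := by rwa [sub_eq_zero] at h
    have hi' := ZMod.val_cast_of_lt (n := 2 * d + 1) hi
    have hj' := ZMod.val_cast_of_lt (n := 2 * d + 1) hj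
    rw [← hi', ← hj', hij']
  set c : Fin d → ZMod (2 * d + 1) := fun t => k * (g : ZMod (2 * d + 1)) ^ (t : ℕ) with hcdef
  have hc0 : ∀ t, c t ≠ 0 := fun t => mul_ne_zero hk0 (pow_ne_zero _ (Units.ne_zero g))
  set v : Fin d → ℕ := fun t => (c t).val with hvdef
  have hv1 : ∀ t, 1 ≤ v t ∧ v t ≤ 2 * d := by
    intro t
    have h1 : v t < 2 * d + 1 := ZMod.val_lt _
    have h2 : v t ≠ 0 := fun h => hc0 t ((ZMod.val_eq_zero _).mp h)
    omega
  set m : Fin d → ℕ := fun t => min (v t) (2 * d + 1 - v t) with hmdef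
  have hm1 : ∀ t, 1 ≤ m t ∧ m t ≤ d := by
    intro t
    have := hv1 t
    simp only [hmdef]
    omega
  -- injectivity of m
  have hminj : Function.Injective m := by
    intro t t' h
    have hvt := hv1 t
    have hvt' := hv1 t'
    have hvv : v t = v t' ∨ v t = 2 * d + 1 - v t' := by
      simp only [hmdef] at h
      omega
    have hcc : c t = c t' ∨ c t = -c t' := by
      rcases hvv with h' | h'
      · exact Or.inl (ZMod.val_injective _ h')
      · right
        have hneg' : (-(c t')).val = 2 * d + 1 - v t' := by
          rw [ZMod.neg_val, if_neg (hc0 t')]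
        exact ZMod.val_injective _ (h'.trans hneg'.symm)
    have ht : (t : ℕ) < d := t.2
    have ht' : (t' : ℕ) < d := t'.2
    simp only [hcdef] at hcc
    rcases hcc with h' | h'
    · have hgg : (g : ZMod (2 * d + 1)) ^ (t : ℕ) = (g : ZMod (2 * d + 1)) ^ (t' : ℕ) :=
        mul_left_cancel₀ hk0 h'
      exact Fin.ext (hginj _ _ (by omega) (by omega) hgg)
    · exfalso
      have hgg : (g : ZMod (2 * d + 1)) ^ (t : ℕ) = (g : ZMod (2 * d + 1)) ^ (d + (t' : ℕ)) := by
        have h2 : (g : ZMod (2 * d + 1)) ^ (d + (t' : ℕ))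
            = -((g : ZMod (2 * d + 1)) ^ (t' : ℕ)) := by
          rw [pow_add, hneg]; ring
        rw [h2]
        refine mul_left_cancel₀ hk0 ?_
        rw [h']; ring
      have := hginj _ _ (by omega) (by omega) hgg
      omega
  -- image of m is Icc 1 d
  have himg : Finset.image m Finset.univ = Finset.Icc 1 d := by
    apply Finset.eq_of_subset_of_card_le
    · intro x hx
      simp only [Finset.mem_image] at hx
      obtain ⟨t, -, rfl⟩ := hx
      have := hm1 t
      simp only [Finset.mem_Icc]
      omega
    · rw [Nat.card_Icc, Finset.card_image_of_injective _ hminj]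
      simp
  have hsumnat : (∑ t : Fin d, (m t) ^ 2) * 6 = d * (d + 1) * (2 * d + 1) := by
    rw [← sq_sum_aux d, ← himg, Finset.sum_image (fun a _ b _ h => hminj h)]
  -- coordinate computation
  set z : Fin d → ℕ := fun t => ((g : ZMod (2 * d + 1)) ^ (t : ℕ)).val with hzdef
  have hzc : ∀ t, ((z t : ℕ) : ZMod (2 * d + 1)) = (g : ZMod (2 * d + 1)) ^ (t : ℕ) := by
    intro t
    exact ZMod.natCast_rightInverse _
  have hcoord : ∀ t : Fin d,
      min |latticePoint (2 * d + 1) d z i t - latticePoint (2 * d + 1) d z j t|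
          (1 - |latticePoint (2 * d + 1) d z i t - latticePoint (2 * d + 1) d z j t|)
        = (m t : ℝ) / (2 * d + 1 : ℕ) := by
    intro t
    set a : ℕ := (i * z t) % (2 * d + 1) with hadef
    set b : ℕ := (j * z t) % (2 * d + 1) with hbdef
    have ha : a < 2 * d + 1 := Nat.mod_lt _ hnpos
    have hb : b < 2 * d + 1 := Nat.mod_lt _ hnpos
    have haz : ((a : ℕ) : ZMod (2 * d + 1))
        = (i : ZMod (2 * d + 1)) * (g : ZMod (2 * d + 1)) ^ (t : ℕ) := by
      rw [hadef, ZMod.natCast_mod, Nat.cast_mul, hzc]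
    have hbz : ((b : ℕ) : ZMod (2 * d + 1))
        = (j : ZMod (2 * d + 1)) * (g : ZMod (2 * d + 1)) ^ (t : ℕ) := by
      rw [hbdef, ZMod.natCast_mod, Nat.cast_mul, hzc]
    have key : ∃ w : ℕ, w ≤ 2 * d + 1 ∧ ((a : ℝ) - b = w ∨ (b : ℝ) - a = w) ∧
        min w (2 * d + 1 - w) = m t := by
      rcases le_or_gt b a with hba | hba
      · refine ⟨a - b, by omega, Or.inl (by push_cast [hba]; ring), ?_⟩
        have hw : ((a - b : ℕ) : ZMod (2 * d + 1)) = c t := by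
          rw [Nat.cast_sub hba, haz, hbz]
          simp only [hcdef, hkdef]
          ring
        have heq : a - b = v t := by
          have h1 : v t = (c t).val := by simp only [hvdef]
          rw [h1, ← hw, ZMod.val_cast_of_lt (by omega)]
        rw [heq]
      · refine ⟨b - a, by omega, Or.inr (by push_cast [le_of_lt hba]; ring), ?_⟩
        have hw : ((b - a : ℕ) : ZMod (2 * d + 1)) = -(c t) := by
          rw [Nat.cast_sub (le_of_lt hba), haz, hbz]
          simp only [hcdef, hkdef]
          ring
        have hnegv : (-(c t)).val = 2 * d + 1 - v t := by
          rw [ZMod.neg_val, if_neg (hc0 t)]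
        have heq : b - a = 2 * d + 1 - v t := by
          rw [← hnegv, ← hw, ZMod.val_cast_of_lt (by omega)]
        rw [heq]
        have := hv1 t
        simp only [hmdef]
        omega
    obtain ⟨w, hwn, hwd, hwm⟩ := key
    have hxy : latticePoint (2 * d + 1) d z i t - latticePoint (2 * d + 1) d z j t
        = ((a : ℝ) - b) / (2 * d + 1 : ℕ) := by
      simp only [latticePoint, ← hadef, ← hbdef]
      ring
    have hnR : (0 : ℝ) < ((2 * d + 1 : ℕ) : ℝ) := by positivity
    have habs : |latticePoint (2 * d + 1) d z i t - latticePoint (2 * d + 1) d z j t|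
        = (w : ℝ) / (2 * d + 1 : ℕ) := by
      rw [hxy, abs_div, abs_of_nonneg (le_of_lt hnR)]
      congr 1
      rcases hwd with h | h
      · rw [abs_of_nonneg (by rw [h]; positivity), h]
      · rw [abs_of_nonpos (by nlinarith [h] : (a : ℝ) - b ≤ 0), ← h]
        ring
    rw [habs]
    have h1 : (1 : ℝ) - (w : ℝ) / (2 * d + 1 : ℕ)
        = ((2 * d + 1 - w : ℕ) : ℝ) / (2 * d + 1 : ℕ) := by
      rw [Nat.cast_sub hwn]
      field_simp
    rw [h1, min_div_div_right (le_of_lt hnR), ← Nat.cast_min, hwm]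
  -- assemble
  unfold torDist2
  have hsum : (∑ t : Fin d,
      (min |latticePoint (2 * d + 1) d z i t - latticePoint (2 * d + 1) d z j t|
        (1 - |latticePoint (2 * d + 1) d z i t - latticePoint (2 * d + 1) d z j t|)) ^ 2)
      = ((d : ℝ) * (d + 1) * (2 * d + 1) / 6) / ((2 * d + 1 : ℕ) : ℝ) ^ 2 := by
    rw [Finset.sum_congr rfl (fun t _ => by rw [hcoord t])]
    have h2 : ∀ t : Fin d, ((m t : ℝ) / (2 * d + 1 : ℕ)) ^ 2
        = (m t : ℝ) ^ 2 / ((2 * d + 1 : ℕ) : ℝ) ^ 2 := by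
      intro t; rw [div_pow]
    rw [Finset.sum_congr rfl (fun t _ => h2 t), ← Finset.sum_div]
    congr 1
    have hc6 : ((∑ t : Fin d, (m t) ^ 2 : ℕ) : ℝ) * 6 = (d : ℝ) * (d + 1) * (2 * d + 1) := by
      exact_mod_cast congrArg (Nat.cast : ℕ → ℝ) hsumnat
    push_cast at hc6 ⊢
    linarith
  rw [hsum, Real.sqrt_div (by positivity),
    Real.sqrt_sq (by positivity : (0 : ℝ) ≤ ((2 * d + 1 : ℕ) : ℝ))]
  push_cast
  ring
end

section
/- Let n be a prime and H a subgroup of the multiplicative group (Z/nZ)ˣ of order m. Then for every k ∈ {1,...,n-1}, the absolute value of the Gauss-type sum ∑_{z∈H} e^{2πi z k / n} is at most √n. -/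
open Complex
open scoped Classical

/-- For n prime and H a multiplicative subgroup of (Z/nZ)ˣ of order m, and any
k ∈ {1,...,n-1}, the exponential sum |∑_{z∈H} e^{2πi z k / n}| is at most √n. -/
theorem stmt18 (n m : ℕ) [NeZero n] (hn : n.Prime) (H : Subgroup (ZMod n)ˣ)
    (hH : Nat.card H = m) (k : ℕ) (hk1 : 1 ≤ k) (hk2 : k ≤ n - 1) :
    ‖(∑ z : H, Complex.exp (2 * Real.pi * I * (((z : (ZMod n)ˣ) : ZMod n).val : ℂ) * k / n))‖ ≤
      Real.sqrt n := by
  have := Fact.mk hn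
  set ψ : AddChar (ZMod n) ℂ := ZMod.stdAddChar with hψ
  set g : ZMod n → ℂ := fun t => ∑ z : H, ψ ((z : (ZMod n)ˣ) * t) with hg
  set k0 : ZMod n := (k : ZMod n) with hk0def
  have hk0 : k0 ≠ 0 := by
    rw [hk0def, Ne, ZMod.natCast_eq_zero_iff]
    intro hdvd
    have h1 := Nat.le_of_dvd hk1 hdvd
    have h2 := hn.two_le
    omega
  -- conjugation of ψ
  have habs : ∀ a : ZMod n, ‖ψ a‖ = 1 := by
    intro a; rw [hψ, ZMod.stdAddChar_apply]; exact Circle.norm_coe _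
  have hconj : ∀ a : ZMod n, (starRingEnd ℂ) (ψ a) = ψ (-a) := by
    intro a
    have h0 : ψ a ≠ 0 := by
      intro h; have := habs a; rw [h] at this; simp at this
    have h1 : (starRingEnd ℂ) (ψ a) * ψ a = 1 := by
      rw [mul_comm, Complex.mul_conj, Complex.normSq_eq_norm_sq, habs]; norm_num
    have h2 : ψ (-a) * ψ a = 1 := by
      rw [← AddChar.map_add_eq_mul]; simp
    exact mul_right_cancel₀ h0 (h1.trans h2.symm)
  -- Step A : rewrite the sum as g k0
  have hA : (∑ z : H, Complex.exp (2 * Real.pi * I * (((z : (ZMod n)ˣ) : ZMod n).val : ℂ) * k / n))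
      = g k0 := by
    rw [hg]
    refine Finset.sum_congr rfl fun z _ => ?_
    have : ((z : (ZMod n)ˣ) : ZMod n) * k0
        = ((((((z : (ZMod n)ˣ) : ZMod n).val * k : ℕ) : ℤ)) : ZMod n) := by
      rw [hk0def]
      push_cast
      rw [ZMod.natCast_val, ZMod.cast_id]
    rw [this, hψ, ZMod.stdAddChar_coe]
    congr 1
    push_cast
    ring
  rw [hA]
  -- Step B : Parseval
  have hB : ∑ t : ZMod n, Complex.normSq (g t) = (n : ℝ) * m := by
    have hBC : ∑ t : ZMod n, (Complex.normSq (g t) : ℂ) = (n : ℂ) * m := by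
      have hterm : ∀ t : ZMod n, (Complex.normSq (g t) : ℂ)
          = ∑ z : H, ∑ w : H, ψ (t * (((z : (ZMod n)ˣ) : ZMod n) - ((w : (ZMod n)ˣ) : ZMod n))) := by
        intro t
        rw [← Complex.mul_conj, hg]
        rw [map_sum, Finset.sum_mul_sum]
        refine Finset.sum_congr rfl fun z _ => Finset.sum_congr rfl fun w _ => ?_
        rw [hconj, ← AddChar.map_add_eq_mul]
        congr 1
        ring
      rw [Finset.sum_congr rfl fun t _ => hterm t, Finset.sum_comm]
      have hswap : ∀ z : H, ∑ t : ZMod n, ∑ w : H,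
          ψ (t * (((z : (ZMod n)ˣ) : ZMod n) - ((w : (ZMod n)ˣ) : ZMod n)))
          = ∑ w : H, ∑ t : ZMod n,
          ψ (t * (((z : (ZMod n)ˣ) : ZMod n) - ((w : (ZMod n)ˣ) : ZMod n))) :=
        fun z => Finset.sum_comm
      rw [Finset.sum_congr rfl fun z _ => hswap z]
      have inner : ∀ z w : H,
          ∑ t : ZMod n, ψ (t * (((z : (ZMod n)ˣ) : ZMod n) - ((w : (ZMod n)ˣ) : ZMod n)))
          = (((if ((z : (ZMod n)ˣ) : ZMod n) - ((w : (ZMod n)ˣ) : ZMod n) = 0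
            then Fintype.card (ZMod n) else 0 : ℕ)) : ℂ) := by
        intro z w
        exact AddChar.sum_mulShift _ (ZMod.isPrimitive_stdAddChar n)
      rw [Finset.sum_congr rfl fun z _ => Finset.sum_congr rfl fun w _ => inner z w]
      have hcond : ∀ z w : H,
          (((z : (ZMod n)ˣ) : ZMod n) - ((w : (ZMod n)ˣ) : ZMod n) = 0) ↔ w = z := by
        intro z w
        rw [sub_eq_zero]
        constructor
        · intro h
          exact Subtype.ext (Units.ext h.symm)
        · intro h; rw [h]
      simp_rw [hcond]
      have inner2 : ∀ z : H,
          ∑ w : H, (((if w = z then Fintype.card (ZMod n) else 0 : ℕ)) : ℂ) = (n : ℂ) := by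
        intro z
        simp only [Nat.cast_ite, Nat.cast_zero]
        rw [Finset.sum_ite_eq' Finset.univ z (fun _ => ((Fintype.card (ZMod n) : ℕ) : ℂ))]
        simp [ZMod.card]
      rw [Finset.sum_congr rfl fun z _ => inner2 z, Finset.sum_const, Finset.card_univ,
        ← Nat.card_eq_fintype_card, hH, nsmul_eq_mul]
      ring
    have : ((∑ t : ZMod n, Complex.normSq (g t) : ℝ) : ℂ) = (((n : ℝ) * m : ℝ) : ℂ) := by
      push_cast
      exact hBC
    exact_mod_cast this
  -- invariance of g under H-translation
  have hinv : ∀ h : H, g (((h : (ZMod n)ˣ) : ZMod n) * k0) = g k0 := by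
    intro h
    rw [hg]
    refine Fintype.sum_equiv (Equiv.mulRight h) _ _ fun z => ?_
    simp only [Equiv.coe_mulRight]
    congr 1
    push_cast
    ring
  -- the map h ↦ h * k0 is injective
  have hinj : Function.Injective (fun h : H => ((h : (ZMod n)ˣ) : ZMod n) * k0) := by
    intro a b hab
    simp only at hab
    have := mul_right_cancel₀ hk0 hab
    exact Subtype.ext (Units.ext this)
  -- Step C
  have hm : 0 < m := by
    rw [← hH]
    exact Nat.card_pos
  have hC : (m : ℝ) * Complex.normSq (g k0) ≤ (n : ℝ) * m := by
    have h1 : ∑ h : H, Complex.normSq (g (((h : (ZMod n)ˣ) : ZMod n) * k0))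
        = (m : ℝ) * Complex.normSq (g k0) := by
      rw [Finset.sum_congr rfl fun h _ => by rw [hinv h]]
      rw [Finset.sum_const, Finset.card_univ, ← Nat.card_eq_fintype_card, hH]
      simp [nsmul_eq_mul]
    have himg : ∑ h : H, Complex.normSq (g (((h : (ZMod n)ˣ) : ZMod n) * k0))
        = ∑ t ∈ Finset.univ.image (fun h : H => ((h : (ZMod n)ˣ) : ZMod n) * k0),
          Complex.normSq (g t) := by
      rw [Finset.sum_image]
      intro a _ b _ hab
      exact hinj hab
    rw [← h1, ← hB, himg]
    exact Finset.sum_le_sum_of_subset_of_nonneg (Finset.subset_univ _)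
      (fun t _ _ => Complex.normSq_nonneg _)
  have hfinal : Complex.normSq (g k0) ≤ (n : ℝ) := by
    have hmpos : (0 : ℝ) < m := by exact_mod_cast hm
    nlinarith
  rw [← Real.sqrt_sq (norm_nonneg _), ← Complex.normSq_eq_norm_sq]
  exact Real.sqrt_le_sqrt hfinal
end
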